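/- Let G be a DAG and v, w two non-adjacent vertices. Then v and w are d-separated given the parent set pa(v) of v, or d-separated given the parent set pa(w) of w. -/

import Mathlib

/-- `b` is a collider between consecutive path neighbors `a` and `c`:
both edges point into `b`. -/
def IsCollider {V : Type*} (E : V → V → Prop) (a b c : V) : Prop := E a b ∧ E c b

/-- `b` is an ancestor of some node of `C` (via a directed path, possibly trivial). -/
def AncestorOf {V : Type*} (E : V → V → Prop) (b : V) (C : Set V) : Prop :=
  ∃ c ∈ C, Relation.ReflTransGen E b c

/-- `v` and `w` are d-connected given `C` in the directed graph `E`: there is a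
path (a list of distinct vertices, consecutive ones joined by an edge in either
direction) from `v` to `w` on which every collider is an ancestor of `C` and no
non-collider lies in `C`. -/
def DConnected {V : Type*} (E : V → V → Prop) (C : Set V) (v w : V) : Prop :=
  ∃ l : List V, l.Nodup ∧ List.Chain' (fun a b => E a b ∨ E b a) l ∧
    l.head? = some v ∧ l.getLast? = some w ∧
    ∀ a b c : V, [a, b, c] <:+: l →
      (IsCollider E a b c → AncestorOf E b C) ∧ (¬ IsCollider E a b c → b ∉ C)

/-- `v` and `w` are d-separated given `C`. -/
def DSeparated {V : Type*} (E : V → V → Prop) (C : Set V) (v w : V) : Prop :=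
  ¬ DConnected E C v w

section
variable {V : Type*} {E : V → V → Prop}

lemma no2cycle (hacyc : ∀ x : V, ¬ Relation.TransGen E x x) {x y : V}
    (h1 : E x y) (h2 : E y x) : False :=
  hacyc x (Relation.TransGen.head h1 (Relation.TransGen.single h2))

lemma aux_descend (hacyc : ∀ x : V, ¬ Relation.TransGen E x x) (w v : V)
    (l : List V)
    (hch : List.Chain' (fun a b => E a b ∨ E b a) l)
    (htrip : ∀ a b c : V, [a, b, c] <:+: l →
      (IsCollider E a b c → AncestorOf E b {u | E u w}) ∧
      (¬ IsCollider E a b c → b ∉ {u | E u w})) :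
    ∀ t (a b : V), (a :: b :: t) <:+: l → (b :: t).getLast? = some v →
      Relation.TransGen E w b → E a b → Relation.TransGen E w v := by
  intro t
  induction t with
  | nil =>
    intro a b _ hlast hwb _
    simp at hlast
    exact hlast ▸ hwb
  | cons c t' ih =>
    intro a b hinf hlast hwb hab
    have hch' : List.Chain' (fun a b => E a b ∨ E b a) (a :: b :: c :: t') :=
      hch.infix hinf
    have hbc : E b c ∨ E c b := (hch'.tail).rel_head
    rcases hbc with hbc | hcb
    · have hinf' : (b :: c :: t') <:+: l :=
        List.IsInfix.trans ⟨[a], [], by simp⟩ hinf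
      exact ih b c hinf' (by simpa using hlast) (hwb.tail hbc) hbc
    · have htr : [a, b, c] <:+: l := List.IsInfix.trans ⟨[], t', rfl⟩ hinf
      obtain ⟨u, hu, hbu⟩ := (htrip a b c htr).1 ⟨hab, hcb⟩
      exact absurd ((hwb.trans_left hbu).tail hu) (hacyc w)

lemma key (hacyc : ∀ x : V, ¬ Relation.TransGen E x x) (w v : V)
    (hwv : ¬ Relation.TransGen E w v) (hne : w ≠ v)
    (h1 : ¬ E v w) (h2 : ¬ E w v) :
    ¬ DConnected E {u | E u w} w v := by
  rintro ⟨l, hnd, hch, hhd, hlast, htrip⟩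
  obtain ⟨t, rfl⟩ : ∃ t, l = w :: t := by
    cases l with
    | nil => simp at hhd
    | cons x t =>
      have hx : x = w := by simpa using hhd
      exact ⟨t, by rw [hx]⟩
  match t with
  | [] => exact hne (by simpa using hlast)
  | (b :: t') =>
    have hwb : E w b ∨ E b w := hch.rel_head
    rcases hwb with hwb | hbw
    · exact hwv (aux_descend hacyc w v (w :: b :: t') hch htrip t' w b (List.infix_refl _)
        (by simpa using hlast) (Relation.TransGen.single hwb) hwb)
    · match t' with
      | [] =>
        have : b = v := by simpa using hlast
        exact h1 (this ▸ hbw)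
      | (c :: t'') =>
        have htr : [w, b, c] <:+: (w :: b :: c :: t'') := ⟨[], t'', rfl⟩
        have hnc : ¬ IsCollider E w b c := fun ⟨hwb', _⟩ => no2cycle hacyc hwb' hbw
        exact (htrip w b c htr).2 hnc hbw

lemma DConnected.symm {C : Set V} {v w : V} (h : DConnected E C v w) :
    DConnected E C w v := by
  obtain ⟨l, hnd, hch, hhd, hlast, htrip⟩ := h
  refine ⟨l.reverse, List.nodup_reverse.mpr hnd, ?_, by simpa using hlast, by simpa using hhd, ?_⟩
  · rw [List.Chain', List.isChain_reverse]
    exact hch.imp (fun a b h => h.symm)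
  · intro a b c hinf
    have hinf' : [c, b, a] <:+: l := by
      have := hinf.reverse
      simpa using this
    have := htrip c b a hinf'
    constructor
    · intro ⟨h1, h2⟩; exact this.1 ⟨h2, h1⟩
    · intro h; exact this.2 (fun ⟨h1, h2⟩ => h ⟨h2, h1⟩)

end

/-- In a DAG, two non-adjacent vertices `v` and `w` are d-separated given the
parents of `v`, or d-separated given the parents of `w`. -/
theorem dsep_given_parents {V : Type*} [Fintype V] (E : V → V → Prop)
    (hacyc : ∀ x : V, ¬ Relation.TransGen E x x)
    (v w : V) (hvw : v ≠ w) (hnadj : ¬ E v w ∧ ¬ E w v) :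
    DSeparated E {u | E u v} v w ∨ DSeparated E {u | E u w} v w := by
  by_cases h : Relation.TransGen E v w
  · right
    intro hcon
    exact key hacyc w v (fun h2 => hacyc v (h.trans h2)) hvw.symm hnadj.1 hnadj.2
      hcon.symm
  · left
    intro hcon
    exact key hacyc v w h hvw hnadj.2 hnadj.1 hcon
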